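/- Let $q \ge 2$ be a prime power. Let $A_m$ be the $t^m$-coefficient of $\frac{1}{(1-t)(1-qt)(1-q^2t)}$ (the number of effective $0$-cycles of degree $m$ on $\mathbb{P}^2/\mathbb{F}_q$) and let $P_m = \frac{1}{m}\sum_{r\mid m}\mu(m/r)(q^{2r}+q^r+1)$ (the number of prime effective $0$-cycles of degree $m$). Then $\frac{P_m}{A_m} = \frac{1}{m}\left(1 - q^{-1} - q^{-2} + q^{-3}\right) + O\left(\frac{1}{m q^m}\right)$ as $m \to \infty$. -/

import Mathlib

open Finset Filter Asymptotics

section stmt6helpers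

lemma stmt6_coeff_mk_mul (f : ℕ → ℝ) (a : ℝ) (j n : ℕ) :
    (PowerSeries.coeff (R := ℝ) n) (PowerSeries.mk f * (PowerSeries.C (R := ℝ) a * PowerSeries.X ^ j))
      = a * (if j ≤ n then f (n - j) else 0) := by
  rw [show PowerSeries.mk f * (PowerSeries.C (R := ℝ) a * PowerSeries.X ^ j)
      = PowerSeries.C (R := ℝ) a * (PowerSeries.mk f * PowerSeries.X ^ j) by ring,
    PowerSeries.coeff_C_mul, PowerSeries.coeff_mul_X_pow']
  simp [PowerSeries.coeff_mk]

lemma stmt6aux (q : ℝ) (hq : 2 ≤ q) :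
    ((1 - PowerSeries.X) * (1 - PowerSeries.C (R := ℝ) q * PowerSeries.X) *
        (1 - PowerSeries.C (R := ℝ) (q ^ 2) * PowerSeries.X)) *
      PowerSeries.mk (fun m => 1/((1-q)*(1-q^2)) + (-q/(q-1)^2)*q^m
        + (q^3/((q-1)^2*(q+1)))*q^(2*m)) = 1 := by
  have hq0 : q ≠ 0 := by nlinarith
  have hq1 : q - 1 ≠ 0 := by nlinarith
  have hq1' : (1:ℝ) - q ≠ 0 := by nlinarith
  have hq2 : q + 1 ≠ 0 := by nlinarith
  have hq4 : (1:ℝ) - q^2 ≠ 0 := by nlinarith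
  set f : ℕ → ℝ := fun m => 1/((1-q)*(1-q^2)) + (-q/(q-1)^2)*q^m
        + (q^3/((q-1)^2*(q+1)))*q^(2*m) with hf
  have h1 : ((1 - PowerSeries.X) * (1 - PowerSeries.C (R := ℝ) q * PowerSeries.X) *
        (1 - PowerSeries.C (R := ℝ) (q ^ 2) * PowerSeries.X)) * PowerSeries.mk f
      = PowerSeries.mk f * (PowerSeries.C (R := ℝ) 1 * PowerSeries.X ^ 0)
        - PowerSeries.mk f * (PowerSeries.C (R := ℝ) (1 + q + q^2) * PowerSeries.X ^ 1)
        + PowerSeries.mk f * (PowerSeries.C (R := ℝ) (q + q^2 + q^3) * PowerSeries.X ^ 2)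
        - PowerSeries.mk f * (PowerSeries.C (R := ℝ) (q^3) * PowerSeries.X ^ 3) := by
    simp only [map_add, map_mul, map_one, map_pow]
    ring
  rw [h1]
  ext n
  rw [map_sub, map_add, map_sub, stmt6_coeff_mk_mul, stmt6_coeff_mk_mul, stmt6_coeff_mk_mul,
    stmt6_coeff_mk_mul, PowerSeries.coeff_one]
  have hff : ∀ k, f k = 1/((1-q)*(1-q^2)) + (-q/(q-1)^2)*q^k
        + (q^3/((q-1)^2*(q+1)))*q^(2*k) := fun k => rfl
  rcases n with _ | _ | _ | m
  · norm_num [hff]; field_simp; ring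
  · norm_num [hff]; field_simp; ring
  · norm_num [hff]; field_simp; ring
  · have h3 : ¬ (m + 3 = 0) := by omega
    rw [if_pos (by omega : 1 ≤ m + 3), if_pos (by omega : 2 ≤ m + 3),
      if_pos (by omega : 3 ≤ m + 3), if_pos (by omega : 0 ≤ m + 3), if_neg h3,
      show m + 3 - 1 = m + 2 by omega, show m + 3 - 2 = m + 1 by omega,
      show m + 3 - 3 = m by omega, show m + 3 - 0 = m + 3 by omega,
      hff, hff, hff, hff]
    field_simp
    ring

open Finset

lemma geomb (q : ℝ) (hq : 2 ≤ q) (k : ℕ) : ∑ j ∈ range k, q ^ j ≤ q ^ k := by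
  have h1 : (∑ j ∈ range k, q ^ j) * (q - 1) = q ^ k - 1 := geom_sum_mul q k
  nlinarith [Finset.sum_nonneg (fun j (_ : j ∈ range k) => pow_nonneg (by linarith : (0:ℝ) ≤ q) j),
    pow_nonneg (by linarith : (0:ℝ) ≤ q) k]

lemma sumbound (q : ℝ) (hq : 2 ≤ q) (m : ℕ) (hm : 1 ≤ m) :
    |(∑ r ∈ m.divisors,
        ((ArithmeticFunction.moebius (m / r) : ℤ) : ℝ) * (q ^ (2 * r) + q ^ r + 1)) - q ^ (2 * m)|
      ≤ (q ^ 2 + q + 1) * q ^ m := by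
  have hq0 : (0:ℝ) ≤ q := by linarith
  have hq1 : (1:ℝ) ≤ q := by linarith
  have hmem : m ∈ m.divisors := Nat.mem_divisors_self m (by omega)
  have hmu : ∀ k : ℕ, |((ArithmeticFunction.moebius k : ℤ) : ℝ)| ≤ 1 := by
    intro k
    exact_mod_cast ArithmeticFunction.abs_moebius_le_one (n := k)
  -- split
  have hsplit : (∑ r ∈ m.divisors,
        ((ArithmeticFunction.moebius (m / r) : ℤ) : ℝ) * (q ^ (2 * r) + q ^ r + 1))
      = (∑ r ∈ m.divisors, ((ArithmeticFunction.moebius (m / r) : ℤ) : ℝ) * q ^ (2 * r))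
      + (∑ r ∈ m.divisors, ((ArithmeticFunction.moebius (m / r) : ℤ) : ℝ) * q ^ r)
      + (∑ r ∈ m.divisors, ((ArithmeticFunction.moebius (m / r) : ℤ) : ℝ)) := by
    rw [← Finset.sum_add_distrib, ← Finset.sum_add_distrib]; congr 1; ext r; ring
  -- S2 - q^(2m)
  have hS2 : (∑ r ∈ m.divisors, ((ArithmeticFunction.moebius (m / r) : ℤ) : ℝ) * q ^ (2 * r))
      = q ^ (2 * m) + ∑ r ∈ m.divisors.erase m,
          ((ArithmeticFunction.moebius (m / r) : ℤ) : ℝ) * q ^ (2 * r) := by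
    rw [← Finset.add_sum_erase _ _ hmem, Nat.div_self (by omega : 0 < m)]
    simp
  have herase_sub : m.divisors.erase m ⊆ Finset.range (m / 2 + 1) := by
    intro r hr
    rw [Finset.mem_erase] at hr
    obtain ⟨hne, hdvd⟩ := hr
    rw [Nat.mem_divisors] at hdvd
    obtain ⟨⟨k, hk⟩, hm0⟩ := hdvd
    have hk2 : 2 ≤ k := by
      rcases k with _ | _ | k
      · simp at hk; omega
      · simp at hk; omega
      · omega
    have h2r : 2 * r ≤ m := by
      calc 2 * r ≤ k * r := Nat.mul_le_mul_right r hk2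
        _ = m := by rw [hk, Nat.mul_comm]
    rw [Finset.mem_range]; omega
  have hsub2 : ∀ (e : ℕ), 1 ≤ e →
      |∑ r ∈ m.divisors.erase m, ((ArithmeticFunction.moebius (m / r) : ℤ) : ℝ) * q ^ (e * r)|
        ≤ ∑ j ∈ Finset.range (m / 2 + 1), q ^ (e * j) := by
    intro e he
    calc |∑ r ∈ m.divisors.erase m, ((ArithmeticFunction.moebius (m / r) : ℤ) : ℝ) * q ^ (e * r)|
        ≤ ∑ r ∈ m.divisors.erase m, |((ArithmeticFunction.moebius (m / r) : ℤ) : ℝ) * q ^ (e * r)| :=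
          Finset.abs_sum_le_sum_abs _ _
      _ ≤ ∑ r ∈ m.divisors.erase m, q ^ (e * r) := by
          apply Finset.sum_le_sum
          intro r _
          rw [abs_mul, abs_pow, abs_of_nonneg hq0]
          calc |((ArithmeticFunction.moebius (m/r) : ℤ) : ℝ)| * q ^ (e * r)
              ≤ 1 * q ^ (e * r) := by
                apply mul_le_mul_of_nonneg_right (hmu _) (pow_nonneg hq0 _)
            _ = q ^ (e * r) := one_mul _
      _ ≤ ∑ j ∈ Finset.range (m / 2 + 1), q ^ (e * j) :=
          Finset.sum_le_sum_of_subset_of_nonneg herase_sub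
            (fun j _ _ => pow_nonneg hq0 _)
  -- bound on geometric sums of q^(2j)
  have hgeo2 : ∑ j ∈ Finset.range (m / 2 + 1), q ^ (2 * j) ≤ q ^ 2 * q ^ m := by
    have h1 : ∑ j ∈ Finset.range (m / 2 + 1), q ^ (2 * j)
        = ∑ j ∈ Finset.range (m / 2 + 1), (q ^ 2) ^ j := by
      congr 1; ext j; rw [pow_mul]
    rw [h1]
    calc ∑ j ∈ Finset.range (m / 2 + 1), (q ^ 2) ^ j ≤ (q ^ 2) ^ (m / 2 + 1) :=
          geomb (q ^ 2) (by nlinarith) _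
      _ = q ^ (2 * (m / 2)) * q ^ 2 := by
          rw [← pow_mul]; rw [show 2 * (m/2+1) = 2 * (m/2) + 2 by ring, pow_add]
      _ ≤ q ^ m * q ^ 2 := by
          apply mul_le_mul_of_nonneg_right _ (by positivity)
          exact pow_le_pow_right₀ hq1 (by omega)
      _ = q ^ 2 * q ^ m := by ring
  -- bound S1
  have hS1 : |∑ r ∈ m.divisors, ((ArithmeticFunction.moebius (m / r) : ℤ) : ℝ) * q ^ r|
      ≤ q * q ^ m := by
    calc |∑ r ∈ m.divisors, ((ArithmeticFunction.moebius (m / r) : ℤ) : ℝ) * q ^ r|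
        ≤ ∑ r ∈ m.divisors, |((ArithmeticFunction.moebius (m / r) : ℤ) : ℝ) * q ^ r| :=
          Finset.abs_sum_le_sum_abs _ _
      _ ≤ ∑ r ∈ m.divisors, q ^ r := by
          apply Finset.sum_le_sum; intro r _
          rw [abs_mul, abs_pow, abs_of_nonneg hq0]
          nlinarith [hmu (m/r), pow_nonneg hq0 r, abs_nonneg ((ArithmeticFunction.moebius (m/r) : ℤ) : ℝ)]
      _ ≤ ∑ j ∈ Finset.range (m + 1), q ^ j :=
          Finset.sum_le_sum_of_subset_of_nonneg
            (fun r hr => Finset.mem_range.mpr (by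
              have := Nat.divisor_le hr; omega))
            (fun j _ _ => pow_nonneg hq0 _)
      _ ≤ q ^ (m + 1) := geomb q hq _
      _ = q * q ^ m := by rw [pow_succ]; ring
  -- bound S0
  have hS0 : |∑ r ∈ m.divisors, ((ArithmeticFunction.moebius (m / r) : ℤ) : ℝ)| ≤ q ^ m := by
    calc |∑ r ∈ m.divisors, ((ArithmeticFunction.moebius (m / r) : ℤ) : ℝ)|
        ≤ ∑ r ∈ m.divisors, |((ArithmeticFunction.moebius (m / r) : ℤ) : ℝ)| :=
          Finset.abs_sum_le_sum_abs _ _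
      _ ≤ ∑ r ∈ m.divisors, (1:ℝ) := Finset.sum_le_sum (fun r _ => hmu _)
      _ = (m.divisors.card : ℝ) := by rw [Finset.sum_const, nsmul_eq_mul, mul_one]
      _ ≤ m := by
          have : m.divisors.card ≤ m := by
            have h1 : m.divisors ⊆ Finset.Icc 1 m := by
              intro r hr
              rw [Finset.mem_Icc]
              exact ⟨Nat.one_le_iff_ne_zero.mpr (Nat.pos_of_mem_divisors hr).ne',
                Nat.divisor_le hr⟩
            calc m.divisors.card ≤ (Finset.Icc 1 m).card := Finset.card_le_card h1
              _ = m := by rw [Nat.card_Icc]; omega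
          exact_mod_cast this
      _ ≤ 2 ^ m := by
          exact_mod_cast (Nat.lt_two_pow_self (n := m)).le
      _ ≤ q ^ m := by
          apply pow_le_pow_left₀ (by norm_num) hq m
  -- combine
  have h2 := hsub2 2 (by norm_num)
  rw [hsplit, hS2]
  have := abs_add_le (∑ r ∈ m.divisors.erase m, ((ArithmeticFunction.moebius (m / r) : ℤ) : ℝ) * q ^ (2*r))
  calc |q ^ (2*m) + (∑ r ∈ m.divisors.erase m, ((ArithmeticFunction.moebius (m / r) : ℤ) : ℝ) * q ^ (2 * r))
        + (∑ r ∈ m.divisors, ((ArithmeticFunction.moebius (m / r) : ℤ) : ℝ) * q ^ r)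
        + (∑ r ∈ m.divisors, ((ArithmeticFunction.moebius (m / r) : ℤ) : ℝ)) - q ^ (2*m)|
      = |(∑ r ∈ m.divisors.erase m, ((ArithmeticFunction.moebius (m / r) : ℤ) : ℝ) * q ^ (2 * r))
        + (∑ r ∈ m.divisors, ((ArithmeticFunction.moebius (m / r) : ℤ) : ℝ) * q ^ r)
        + (∑ r ∈ m.divisors, ((ArithmeticFunction.moebius (m / r) : ℤ) : ℝ))| := by
          congr 1; ring
    _ ≤ |(∑ r ∈ m.divisors.erase m, ((ArithmeticFunction.moebius (m / r) : ℤ) : ℝ) * q ^ (2 * r))|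
        + |(∑ r ∈ m.divisors, ((ArithmeticFunction.moebius (m / r) : ℤ) : ℝ) * q ^ r)|
        + |(∑ r ∈ m.divisors, ((ArithmeticFunction.moebius (m / r) : ℤ) : ℝ))| := by
          exact (abs_add_le _ _).trans (by gcongr; exact abs_add_le _ _)
    _ ≤ q^2 * q^m + q * q^m + q^m := by
          gcongr
          exact (h2.trans hgeo2)
    _ = (q^2 + q + 1) * q^m := by ring


end stmt6helpers

set_option maxHeartbeats 1000000 in
/-- Theorem 5.5 analogue over `𝔽_q`: with `A m` the number of effective 0-cycles of degree
`m` on `ℙ²/𝔽_q` (the `t^m`-coefficient of `1/((1-t)(1-qt)(1-q²t))`) and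
`P m = (1/m) ∑_{r ∣ m} μ(m/r) (q^{2r} + q^r + 1)` the number of prime effective 0-cycles,
`P m / A m = (1/m)(1 - q⁻¹ - q⁻² + q⁻³) + O(1/(m q^m))` as `m → ∞`. -/
theorem stmt6 (q : ℝ) (hpp : ∃ p n : ℕ, p.Prime ∧ 0 < n ∧ q = (p : ℝ) ^ n)
    (A : ℕ → ℝ)
    (hA : ((1 - PowerSeries.X) * (1 - PowerSeries.C (R := ℝ) q * PowerSeries.X) *
        (1 - PowerSeries.C (R := ℝ) (q ^ 2) * PowerSeries.X)) * PowerSeries.mk A = 1)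
    (P : ℕ → ℝ)
    (hP : ∀ m : ℕ, 1 ≤ m →
      P m = (1 / m) * ∑ r ∈ m.divisors,
        ((ArithmeticFunction.moebius (m / r) : ℤ) : ℝ) * (q ^ (2 * r) + q ^ r + 1)) :
    (fun m : ℕ => P m / A m - (1 / m) * (1 - q⁻¹ - q⁻¹ ^ 2 + q⁻¹ ^ 3))
      =O[atTop] (fun m : ℕ => 1 / (m * q ^ m)) := by
  -- q ≥ 2
  have hq : 2 ≤ q := by
    obtain ⟨p, n, hp, hn, rfl⟩ := hpp
    have hp2 : (2:ℝ) ≤ (p:ℝ) := by exact_mod_cast hp.two_le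
    calc (2:ℝ) = 2 ^ 1 := (pow_one 2).symm
      _ ≤ 2 ^ n := pow_le_pow_right₀ one_le_two hn
      _ ≤ (p:ℝ) ^ n := pow_le_pow_left₀ (by norm_num) hp2 n
  have hq0 : (0:ℝ) < q := by linarith
  have hq1 : (1:ℝ) ≤ q := by linarith
  -- closed form for A
  obtain ⟨a, ha_def⟩ : ∃ a : ℝ, a = 1/((1-q)*(1-q^2)) := ⟨_, rfl⟩
  obtain ⟨b, hb_def⟩ : ∃ b : ℝ, b = -q/(q-1)^2 := ⟨_, rfl⟩
  obtain ⟨c, hc_def⟩ : ∃ c : ℝ, c = q^3/((q-1)^2*(q+1)) := ⟨_, rfl⟩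
  have hAf : ∀ m : ℕ, A m = a + b * q ^ m + c * q ^ (2 * m) := by
    have h2 := stmt6aux q hq
    set S := (1 - PowerSeries.X) * (1 - PowerSeries.C (R := ℝ) q * PowerSeries.X) *
        (1 - PowerSeries.C (R := ℝ) (q ^ 2) * PowerSeries.X) with hS
    set f : ℕ → ℝ := fun m => 1/((1-q)*(1-q^2)) + (-q/(q-1)^2) * q ^ m
        + (q^3/((q-1)^2*(q+1))) * q ^ (2 * m) with hfdef
    have h2' : S * PowerSeries.mk f = 1 := h2
    have huniq : PowerSeries.mk A = PowerSeries.mk f := by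
      calc PowerSeries.mk A = 1 * PowerSeries.mk A := (one_mul _).symm
        _ = (S * PowerSeries.mk f) * PowerSeries.mk A := by rw [h2']
        _ = (S * PowerSeries.mk A) * PowerSeries.mk f := by ring
        _ = 1 * PowerSeries.mk f := by rw [hA]
        _ = PowerSeries.mk f := one_mul _
    intro m
    have hcm := congrArg (PowerSeries.coeff (R := ℝ) m) huniq
    rw [PowerSeries.coeff_mk, PowerSeries.coeff_mk] at hcm
    rw [hcm, ha_def, hb_def, hc_def]
  -- constants bounds
  have hDpos : (0:ℝ) < (1-q)*(1-q^2) := by nlinarith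
  have ha0 : 0 ≤ a := by rw [ha_def]; positivity
  have ha1 : a ≤ 1 := by rw [ha_def, div_le_one hDpos]; nlinarith
  have hq1sq : (0:ℝ) < (q-1)^2 := by nlinarith
  have hb2 : |b| ≤ 2 := by
    rw [hb_def, abs_div, abs_neg, abs_of_nonneg hq0.le, abs_of_nonneg hq1sq.le,
      div_le_iff₀ hq1sq]
    nlinarith
  have hbneg : -2 ≤ b := by
    have := neg_abs_le b; linarith [hb2]
  have hcpos : (0:ℝ) < (q-1)^2*(q+1) := by nlinarith
  have hc12 : (1:ℝ)/2 ≤ c := by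
    rw [hc_def, le_div_iff₀ hcpos]; nlinarith
  obtain ⟨K, hK_def⟩ : ∃ K : ℝ, K = 1 - q⁻¹ - q⁻¹ ^ 2 + q⁻¹ ^ 3 := ⟨_, rfl⟩
  have hqne : q ≠ 0 := hq0.ne'
  have hKc : K * c = 1 := by
    rw [hK_def, hc_def]
    have hq1ne : q - 1 ≠ 0 := by linarith
    have hq2ne : q + 1 ≠ 0 := by linarith
    field_simp
    ring
  have hu0 : 0 < q⁻¹ := by positivity
  have hu2 : q⁻¹ ≤ 1/2 := by
    rw [inv_le_comm₀ hq0 (by norm_num)]; linarith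
  have hK0 : 0 ≤ K := by rw [hK_def]; nlinarith
  have hK1 : K ≤ 1 := by rw [hK_def]; nlinarith
  -- the big-O estimate
  rw [show (fun m : ℕ => P m / A m - (1 / m) * (1 - q⁻¹ - q⁻¹ ^ 2 + q⁻¹ ^ 3))
      = (fun m : ℕ => P m / A m - (1 / m) * K) by rw [hK_def]]
  rw [Asymptotics.isBigO_iff]
  refine ⟨4 * (q^2 + q + 4), ?_⟩
  filter_upwards [eventually_ge_atTop 4] with m hm4
  have hm1 : 1 ≤ m := by omega
  have hmpos : (0:ℝ) < m := by exact_mod_cast Nat.pos_of_ne_zero (by omega)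
  have hqmpos : (0:ℝ) < q ^ m := by positivity
  have hqm1 : (1:ℝ) ≤ q ^ m := one_le_pow₀ hq1
  have hqm16 : (16:ℝ) ≤ q ^ m := by
    calc (16:ℝ) = 2 ^ 4 := by norm_num
      _ ≤ 2 ^ m := pow_le_pow_right₀ one_le_two hm4
      _ ≤ q ^ m := pow_le_pow_left₀ (by norm_num) hq m
  have hq2m : q ^ (2 * m) = q ^ m * q ^ m := by rw [two_mul, pow_add]
  have hAm := hAf m
  have hAlb : (1/4) * (q ^ m * q ^ m) ≤ A m := by
    rw [hAm, hq2m]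
    nlinarith [mul_le_mul_of_nonneg_right hc12 (mul_pos hqmpos hqmpos).le,
      mul_le_mul_of_nonneg_right hbneg hqmpos.le]
  have hApos : 0 < A m := lt_of_lt_of_le (by positivity) hAlb
  -- numerator bound
  have hmP : (m:ℝ) * P m = ∑ r ∈ m.divisors,
      ((ArithmeticFunction.moebius (m / r) : ℤ) : ℝ) * (q ^ (2 * r) + q ^ r + 1) := by
    rw [hP m hm1]
    field_simp
  have hsb := sumbound q hq m hm1
  have hKA : K * A m = K * a + K * b * q ^ m + q ^ (2 * m) := by
    have h0 : K * (a + b * q ^ m + c * q ^ (2*m))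
        = K * a + K * b * q ^ m + (K * c) * q ^ (2*m) := by ring
    rw [hAm, h0, hKc, one_mul]
  have hnum : |(m:ℝ) * P m - K * A m| ≤ (q^2 + q + 4) * q ^ m := by
    have h1 : (m:ℝ) * P m - K * A m
        = ((∑ r ∈ m.divisors, ((ArithmeticFunction.moebius (m / r) : ℤ) : ℝ)
            * (q ^ (2 * r) + q ^ r + 1)) - q ^ (2 * m)) - (K * a + K * b * q ^ m) := by
      rw [hmP, hKA]; ring
    rw [h1]
    have h2 : |K * a + K * b * q ^ m| ≤ 1 + 2 * q ^ m := by
      calc |K * a + K * b * q ^ m| ≤ |K * a| + |K * b * q ^ m| := abs_add_le _ _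
        _ ≤ 1 + 2 * q ^ m := by
            have e1 : |K * a| ≤ 1 := by
              rw [abs_mul, abs_of_nonneg hK0, abs_of_nonneg ha0]
              nlinarith
            have e2 : |K * b * q ^ m| ≤ 2 * q ^ m := by
              rw [abs_mul, abs_mul, abs_of_nonneg hK0, abs_of_nonneg hqmpos.le]
              have hKb : K * |b| ≤ 2 := by nlinarith [abs_nonneg b]
              exact le_trans (mul_le_mul_of_nonneg_right hKb hqmpos.le) le_rfl
            linarith
    calc |((∑ r ∈ m.divisors, ((ArithmeticFunction.moebius (m / r) : ℤ) : ℝ)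
            * (q ^ (2 * r) + q ^ r + 1)) - q ^ (2 * m)) - (K * a + K * b * q ^ m)|
        ≤ |(∑ r ∈ m.divisors, ((ArithmeticFunction.moebius (m / r) : ℤ) : ℝ)
            * (q ^ (2 * r) + q ^ r + 1)) - q ^ (2 * m)| + |K * a + K * b * q ^ m| :=
          abs_sub _ _
      _ ≤ (q^2 + q + 1) * q ^ m + (1 + 2 * q ^ m) := by linarith
      _ ≤ (q^2 + q + 4) * q ^ m := by nlinarith
  -- final
  have hkey : P m / A m - (1 / m) * K = ((m:ℝ) * P m - K * A m) / ((m:ℝ) * A m) := by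
    field_simp
  rw [Real.norm_eq_abs, Real.norm_eq_abs, hkey]
  have hden : (0:ℝ) < (m:ℝ) * A m := mul_pos hmpos hApos
  rw [abs_div, abs_of_nonneg hden.le]
  have hrhs : |1 / ((m:ℝ) * q ^ m)| = 1 / ((m:ℝ) * q ^ m) := by
    rw [abs_of_nonneg]; positivity
  rw [hrhs]
  calc |(m:ℝ) * P m - K * A m| / ((m:ℝ) * A m)
      ≤ ((q^2 + q + 4) * q ^ m) / ((m:ℝ) * ((1/4) * (q ^ m * q ^ m))) := by
        apply div_le_div₀ (by positivity) hnum (by positivity)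
        exact mul_le_mul_of_nonneg_left hAlb hmpos.le
    _ = 4 * (q^2 + q + 4) * (1 / ((m:ℝ) * q ^ m)) := by
        field_simp
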